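/- Let X₁, X₂, X₃, X₄ be real 2×2 matrices with det(X₁−X₂) = det(X₂−X₃) = det(X₃−X₄) = det(X₄−X₁) = 0, and suppose d₁₃ = det(X₁−X₃) > 0 and d₂₄ = det(X₂−X₄) < 0. For t ∈ [0,1] set s = f(t) := t·d₁₃ / (t·d₁₃ − (1−t)·d₂₄). Then det( (t·X₁ + (1−t)·X₂) − (s·X₄ + (1−s)·X₃) ) = 0; moreover f : [0,1] → [0,1] is continuous and increasing with f(0) = 0 and f(1) = 1. -/

import Mathlib

open Matrix

private lemma key_det (X₁ X₂ X₃ X₄ : Matrix (Fin 2) (Fin 2) ℝ)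
    (h12 : (X₁ - X₂).det = 0) (h23 : (X₂ - X₃).det = 0)
    (h34 : (X₃ - X₄).det = 0) (h41 : (X₄ - X₁).det = 0) (t s : ℝ) :
    ((t • X₁ + (1 - t) • X₂) - (s • X₄ + (1 - s) • X₃)).det
      = t * (X₁ - X₃).det + s * (X₂ - X₄).det
        - t * s * ((X₁ - X₃).det + (X₂ - X₄).det) := by
  simp only [Matrix.det_fin_two, Matrix.sub_apply, Matrix.add_apply,
    Matrix.smul_apply, smul_eq_mul] at *
  linear_combination (1 - t - s + t*s) * h23 + (t*(t-1)) * h12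
    + (s*(s-1)) * h34 + (t*s) * h41

/-- Explicit rank-one pairing between the edges `[X₂,X₁]` and `[X₃,X₄]` of a
rank-one square with diagonals of opposite determinant sign, via the function
`f(t) = t d₁₃ / (t d₁₃ − (1−t) d₂₄)`. -/
theorem rankOneSquare_pairing_function
    (X₁ X₂ X₃ X₄ : Matrix (Fin 2) (Fin 2) ℝ)
    (h12 : (X₁ - X₂).det = 0) (h23 : (X₂ - X₃).det = 0)
    (h34 : (X₃ - X₄).det = 0) (h41 : (X₄ - X₁).det = 0)
    (hd13 : 0 < (X₁ - X₃).det) (hd24 : (X₂ - X₄).det < 0)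
    (f : ℝ → ℝ)
    (hfdef : ∀ t : ℝ, f t = t * (X₁ - X₃).det
      / (t * (X₁ - X₃).det - (1 - t) * (X₂ - X₄).det)) :
    (∀ t ∈ Set.Icc (0:ℝ) 1,
      ((t • X₁ + (1 - t) • X₂) - (f t • X₄ + (1 - f t) • X₃)).det = 0) ∧
    ContinuousOn f (Set.Icc (0:ℝ) 1) ∧
    StrictMonoOn f (Set.Icc (0:ℝ) 1) ∧
    Set.MapsTo f (Set.Icc (0:ℝ) 1) (Set.Icc (0:ℝ) 1) ∧
    f 0 = 0 ∧ f 1 = 1 := by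
  set d : ℝ := (X₁ - X₃).det with hd
  set e : ℝ := (X₂ - X₄).det with he
  have hD : ∀ t ∈ Set.Icc (0:ℝ) 1, 0 < t * d - (1 - t) * e := by
    intro t ht
    obtain ⟨ht0, ht1⟩ := ht
    nlinarith [mul_nonneg ht0 hd13.le, mul_nonneg (sub_nonneg.2 ht1) (neg_nonneg.2 hd24.le)]
  refine ⟨?_, ?_, ?_, ?_, ?_, ?_⟩
  · intro t ht
    have hDt := hD t ht
    rw [key_det X₁ X₂ X₃ X₄ h12 h23 h34 h41, hfdef t]
    field_simp
    ring
  · have hfun : Set.EqOn f (fun t => t * d / (t * d - (1 - t) * e)) (Set.Icc 0 1) :=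
      fun t _ => hfdef t
    refine ContinuousOn.congr ?_ hfun
    exact ContinuousOn.div (by fun_prop) (by fun_prop)
      (fun t ht => (hD t ht).ne')
  · intro a ha b hb hab
    rw [hfdef a, hfdef b, div_lt_div_iff₀ (hD a ha) (hD b hb)]
    nlinarith [mul_pos hd13 (neg_pos.2 hd24), sub_pos.2 hab]
  · intro t ht
    have hDt := hD t ht
    obtain ⟨ht0, ht1⟩ := ht
    rw [hfdef t]
    constructor
    · exact div_nonneg (mul_nonneg ht0 hd13.le) hDt.le
    · rw [div_le_one hDt]
      nlinarith [mul_nonneg (sub_nonneg.2 ht1) (neg_nonneg.2 hd24.le)]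
  · simp [hfdef 0]
  · rw [hfdef 1]; field_simp; simp [hd13.ne']
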